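/- Let F : ℂⁿ⁻¹ × ℝ → ℂⁿ (identified with ℝ^{2n−1} → ℝ^{2n}) be a C¹ map of the form F(w,s) = w + (1−s)·π(w) restricted to a C¹ hypersurface, and suppose at a point (z, 1) the derivative of F is invertible (in particular π(z) ≠ 0 and π(z) is transversal to the hypersurface at z). Then there exist a neighborhood W of z and σ > 0 such that F restricts to a bijection from (W ∩ ∂Ω) × (1−σ, 1] onto W ∩ closure(Ω), where ∂Ω is the hypersurface bounding the open set Ω on the side into which π(z) points. -/

import Mathlib

open Set ContinuousLinearMap

theorem aux_stmt16 {E : Type*} [NormedAddCommGroup E] [NormedSpace ℝ E] [FiniteDimensional ℝ E]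
    (Ω : Set E) (r : E → ℝ) (hΩ : IsOpen Ω) (hr : ContDiff ℝ 1 r)
    (hΩr : Ω = {x | r x < 0}) (hfr : frontier Ω = {x | r x = 0})
    (π : E → E) (hπ : ContDiff ℝ 1 π) (z : E) (hz : z ∈ frontier Ω)
    (htrans : fderiv ℝ r z (π z) < 0) :
    ∃ W ∈ nhds z, ∃ σ > (0:ℝ),
      Set.BijOn (fun p : E × ℝ => p.1 + (1 - p.2) • π p.1)
        ((W ∩ frontier Ω) ×ˢ Set.Ioc (1 - σ) 1) (W ∩ closure Ω) := by
  have hrz : r z = 0 := by rw [hfr] at hz; exact hz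
  have hclos : closure Ω = {x | r x ≤ 0} := by
    rw [closure_eq_self_union_frontier, hfr, hΩr]
    ext x; simp [le_iff_lt_or_eq]
  -- the auxiliary map Ψ
  set Ψ : E × ℝ → E × ℝ := fun p => (p.1 + p.2 • π p.1, r p.1) with hΨdef
  have hΨ : ContDiff ℝ 1 Ψ := by
    apply ContDiff.prodMk
    · exact contDiff_fst.add (contDiff_snd.smul (hπ.comp contDiff_fst))
    · exact hr.comp contDiff_fst
  set A := fderiv ℝ r z with hA
  set L : (E × ℝ) →L[ℝ] (E × ℝ) :=
    ((fst ℝ E ℝ) + (snd ℝ E ℝ).smulRight (π z)).prod (A.comp (fst ℝ E ℝ)) with hL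
  have hder : HasFDerivAt Ψ L (z, 0) := by
    have h1 : HasFDerivAt (fun p : E × ℝ => p.1 + p.2 • π p.1)
        ((fst ℝ E ℝ) + (snd ℝ E ℝ).smulRight (π z)) (z, 0) := by
      have hsm : HasFDerivAt (fun p : E × ℝ => p.2 • π p.1)
          ((0:ℝ) • ((fderiv ℝ π z).comp (fst ℝ E ℝ)) + (snd ℝ E ℝ).smulRight (π z)) (z, 0) :=
        (hasFDerivAt_snd.smul
          (((hπ.differentiable one_ne_zero z).hasFDerivAt).comp (z,0) hasFDerivAt_fst))
      rw [zero_smul, zero_add] at hsm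
      exact hasFDerivAt_fst.add hsm
    have h2 : HasFDerivAt (fun p : E × ℝ => r p.1) (A.comp (fst ℝ E ℝ)) (z, 0) :=
      ((hr.differentiable one_ne_zero z).hasFDerivAt).comp (z,0) hasFDerivAt_fst
    exact h1.prodMk h2
  have hinj : Function.Injective L := by
    intro p q hpq
    have h1 : p.1 + p.2 • π z = q.1 + q.2 • π z := congrArg Prod.fst hpq
    have h2 : A p.1 = A q.1 := congrArg Prod.snd hpq
    have hApz : A (π z) ≠ 0 := ne_of_lt htrans
    have h4 : p.1 - q.1 = (q.2 - p.2) • π z := by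
      rw [sub_smul]
      have h1' : p.1 + p.2 • π z - (q.1 + q.2 • π z) = 0 := by rw [h1, sub_self]
      have h5 : p.1 - q.1 - (q.2 • π z - p.2 • π z) = 0 := by rw [← h1']; abel
      rw [sub_eq_zero] at h5; exact h5
    have h5 : (q.2 - p.2) * A (π z) = 0 := by
      rw [← smul_eq_mul, ← map_smul, ← h4, map_sub, h2, sub_self]
    have h6 : q.2 = p.2 := by
      rcases mul_eq_zero.mp h5 with h | h
      · linarith [sub_eq_zero.mp h]
      · exact absurd h hApz
    have h7 : p.1 = q.1 := by
      rw [h6, sub_self, zero_smul, sub_eq_zero] at h4; exact h4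
    exact Prod.ext h7 h6.symm
  have hbij : Function.Bijective L :=
    ⟨hinj, (LinearMap.injective_iff_surjective (f := L.toLinearMap)).mp hinj⟩
  set L' : (E × ℝ) ≃L[ℝ] (E × ℝ) :=
    (LinearEquiv.ofBijective L.toLinearMap hbij).toContinuousLinearEquiv with hL'
  have hcoe : (L' : (E × ℝ) →L[ℝ] (E × ℝ)) = L := by ext p <;> rfl
  have hstrict : HasStrictFDerivAt Ψ (L' : (E × ℝ) →L[ℝ] (E × ℝ)) (z, 0) := by
    have h := (hΨ.contDiffAt (x := ((z, 0) : E × ℝ))).hasStrictFDerivAt one_ne_zero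
    rwa [hder.fderiv, ← hcoe] at h
  set f' := hstrict.toOpenPartialHomeomorph Ψ with hf'
  have hfcoe : (f' : E × ℝ → E × ℝ) = Ψ := hstrict.toOpenPartialHomeomorph_coe
  have hmem : (z, 0) ∈ f'.source := hstrict.mem_toOpenPartialHomeomorph_source
  -- the function h
  set h : E × ℝ → ℝ := fun p => fderiv ℝ r (p.1 + p.2 • π p.1) (π p.1) with hh
  have hhcont : Continuous h := by
    have h1 : Continuous fun p : E × ℝ => fderiv ℝ r (p.1 + p.2 • π p.1) :=
      (hr.continuous_fderiv one_ne_zero).comp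
        (continuous_fst.add (continuous_snd.smul (hπ.continuous.comp continuous_fst)))
    exact h1.clm_apply (hπ.continuous.comp continuous_fst)
  have hhz : h (z, 0) < 0 := by simpa [hh] using htrans
  have hUopen : IsOpen (f'.source ∩ {p | h p < 0}) :=
    f'.open_source.inter (isOpen_lt hhcont continuous_const)
  have hUmem : f'.source ∩ {p | h p < 0} ∈ nhds (z, 0) := hUopen.mem_nhds ⟨hmem, hhz⟩
  rw [mem_nhds_prod_iff] at hUmem
  obtain ⟨u, hu, v, hv, huv⟩ := hUmem
  obtain ⟨W₀, hW₀u, hW₀open, hzW₀⟩ := mem_nhds_iff.mp hu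
  obtain ⟨σ, hσpos, hσv⟩ := Metric.mem_nhds_iff.mp hv
  have hrect : W₀ ×ˢ Ioo (-σ) σ ⊆ f'.source ∩ {p | h p < 0} := by
    intro p hp
    refine huv ⟨hW₀u hp.1, hσv ?_⟩
    rw [Real.ball_eq_Ioo]
    simpa using hp.2
  -- key monotonicity
  have hφd : ∀ w t, HasDerivAt (fun t => r (w + t • π w)) (h (w, t)) t := by
    intro w t
    have h1 : HasDerivAt (fun t : ℝ => w + t • π w) (π w) t := by
      simpa using ((hasDerivAt_id t).smul_const (π w)).const_add w
    exact ((hr.differentiable one_ne_zero _).hasFDerivAt).comp_hasDerivAt t h1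
  have hanti : ∀ w ∈ W₀, StrictAntiOn (fun t => r (w + t • π w)) (Ioo (-σ) σ) := by
    intro w hw
    apply strictAntiOn_of_deriv_neg (convex_Ioo _ _)
    · exact (hr.continuous.comp (continuous_const.add (continuous_id.smul continuous_const))).continuousOn
    · intro t ht
      rw [interior_Ioo] at ht
      rw [(hφd w t).deriv]
      exact (hrect ⟨hw, ht⟩).2
  have h0Ioo : (0:ℝ) ∈ Ioo (-σ) σ := ⟨neg_lt_zero.mpr hσpos, hσpos⟩
  have hkey : ∀ w ∈ W₀, r w = 0 → ∀ t ∈ Ioo (-σ) σ,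
      (r (w + t • π w) ≤ 0 ↔ 0 ≤ t) ∧ (r (w + t • π w) = 0 ↔ t = 0) := by
    intro w hw hrw t ht
    have hφ0 : r (w + (0:ℝ) • π w) = 0 := by simpa using hrw
    constructor
    · constructor
      · intro hle
        by_contra hlt
        push_neg at hlt
        have hgt := hanti w hw ht h0Ioo hlt
        simp only at hgt; rw [hφ0] at hgt
        linarith
      · intro h0t
        rcases eq_or_lt_of_le h0t with he | hl
        · rw [← he]
          simpa using hrw.le
        · have hgt := hanti w hw h0Ioo ht hl
          simp only at hgt; rw [hφ0] at hgt
          linarith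
    · constructor
      · intro heq
        rcases lt_trichotomy t 0 with hc | hc | hc
        · have hgt := hanti w hw ht h0Ioo hc
          simp only at hgt; rw [hφ0] at hgt; linarith
        · exact hc
        · have hgt := hanti w hw h0Ioo ht hc
          simp only at hgt; rw [hφ0] at hgt; linarith
      · intro he; rw [he]; simpa using hrw
  -- the neighborhood W
  set W : Set E := {y | (y, (0:ℝ)) ∈ f'.target ∧ f'.symm (y, 0) ∈ W₀ ×ˢ Ioo (-σ) σ} with hWdef
  have hWopen : IsOpen W := by
    have hmcont : Continuous fun y : E => (y, (0:ℝ)) := continuous_id.prodMk continuous_const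
    have hAopen : IsOpen {y : E | (y, (0:ℝ)) ∈ f'.target} := f'.open_target.preimage hmcont
    have hcsymm : ContinuousOn (fun y : E => f'.symm (y, (0:ℝ))) {y | (y, (0:ℝ)) ∈ f'.target} :=
      f'.continuousOn_symm.comp hmcont.continuousOn (fun y hy => hy)
    have heq : W = {y : E | (y, (0:ℝ)) ∈ f'.target} ∩
        (fun y : E => f'.symm (y, (0:ℝ))) ⁻¹' (W₀ ×ˢ Ioo (-σ) σ) := rfl
    rw [heq]
    exact hcsymm.isOpen_inter_preimage hAopen (hW₀open.prod isOpen_Ioo)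
  have hΨz : Ψ (z, 0) = (z, 0) := by simp [hΨdef, hrz]
  have hzW : z ∈ W := by
    refine ⟨?_, ?_⟩
    · have hmap := f'.map_source hmem
      rwa [hfcoe, hΨz] at hmap
    · have hli := f'.left_inv hmem
      rw [hfcoe, hΨz] at hli
      rw [hli]
      exact ⟨hzW₀, h0Ioo⟩
  -- structural lemmas
  have himg : ∀ w t, (w, t) ∈ W₀ ×ˢ Ioo (-σ) σ → r w = 0 → (w + t • π w) ∈ W := by
    intro w t hwt hrw
    have hsrc : (w, t) ∈ f'.source := (hrect hwt).1
    have hΨwt : Ψ (w, t) = (w + t • π w, 0) := by simp [hΨdef, hrw]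
    refine ⟨?_, ?_⟩
    · have hmap := f'.map_source hsrc
      rwa [hfcoe, hΨwt] at hmap
    · have hli := f'.left_inv hsrc
      rw [hfcoe, hΨwt] at hli
      rw [hli]
      exact hwt
  have hfront : ∀ w ∈ W, r w = 0 → f'.symm (w, (0:ℝ)) = (w, 0) ∧ (w, (0:ℝ)) ∈ W₀ ×ˢ Ioo (-σ) σ := by
    intro w hw hrw
    obtain ⟨htgt, hrectmem⟩ := hw
    have hpsrc : f'.symm (w, (0:ℝ)) ∈ f'.source := f'.map_target htgt
    have hfp : Ψ (f'.symm (w, (0:ℝ))) = (w, 0) := by rw [← hfcoe]; exact f'.right_inv htgt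
    have hrp1 : r (f'.symm (w, (0:ℝ))).1 = 0 := by
      have hc := congrArg Prod.snd hfp; simpa [hΨdef] using hc
    have hyp : (f'.symm (w, (0:ℝ))).1 + (f'.symm (w, (0:ℝ))).2 • π (f'.symm (w, (0:ℝ))).1 = w := by
      have hc := congrArg Prod.fst hfp; simpa [hΨdef] using hc
    have hp1 : (f'.symm (w, (0:ℝ))).1 ∈ W₀ := hrectmem.1
    have hp2 : (f'.symm (w, (0:ℝ))).2 ∈ Ioo (-σ) σ := hrectmem.2
    have hzero2 : (f'.symm (w, (0:ℝ))).2 = 0 :=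
      ((hkey _ hp1 hrp1 _ hp2).2).mp (by rw [hyp, hrw])
    have hweq : (f'.symm (w, (0:ℝ))).1 = w := by
      rw [hzero2, zero_smul, add_zero] at hyp
      exact hyp
    have hpeq : f'.symm (w, (0:ℝ)) = (w, 0) := Prod.ext hweq hzero2
    refine ⟨hpeq, ?_⟩
    rw [← hpeq]
    exact hrectmem
  refine ⟨W, hWopen.mem_nhds hzW, σ, hσpos, ?_, ?_, ?_⟩
  -- MapsTo
  · rintro ⟨w, s⟩ ⟨⟨hwW, hwfr⟩, hs⟩
    have hrw : r w = 0 := by rw [hfr] at hwfr; exact hwfr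
    obtain ⟨hsymm, hw0rect⟩ := hfront w hwW hrw
    have hwW₀ : w ∈ W₀ := hw0rect.1
    have hts : (1 - s) ∈ Ioo (-σ) σ := ⟨by linarith [hs.2, hσpos], by linarith [hs.1]⟩
    refine ⟨?_, ?_⟩
    · exact himg w (1 - s) ⟨hwW₀, hts⟩ hrw
    · rw [hclos]
      exact ((hkey w hwW₀ hrw (1 - s) hts).1).mpr (by linarith [hs.2])
  -- InjOn
  · rintro ⟨w, s⟩ ⟨⟨hwW, hwfr⟩, hs⟩ ⟨w', s'⟩ ⟨⟨hwW', hwfr'⟩, hs'⟩ heq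
    have hrw : r w = 0 := by rw [hfr] at hwfr; exact hwfr
    have hrw' : r w' = 0 := by rw [hfr] at hwfr'; exact hwfr'
    have h1 : w ∈ W₀ := (hfront w hwW hrw).2.1
    have h1' : w' ∈ W₀ := (hfront w' hwW' hrw').2.1
    have hts : (1 - s) ∈ Ioo (-σ) σ := ⟨by linarith [hs.2, hσpos], by linarith [hs.1]⟩
    have hts' : (1 - s') ∈ Ioo (-σ) σ := ⟨by linarith [hs'.2, hσpos], by linarith [hs'.1]⟩
    have hsrc : (w, 1 - s) ∈ f'.source := (hrect ⟨h1, hts⟩).1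
    have hsrc' : (w', 1 - s') ∈ f'.source := (hrect ⟨h1', hts'⟩).1
    have heq' : w + (1 - s) • π w = w' + (1 - s') • π w' := heq
    have hΨeq : Ψ (w, 1 - s) = Ψ (w', 1 - s') := by
      show (w + (1 - s) • π w, r w) = (w' + (1 - s') • π w', r w')
      rw [hrw, hrw', heq']
    have hpeq := f'.injOn hsrc hsrc' (by rw [hfcoe]; exact hΨeq)
    have hww : w = w' := congrArg Prod.fst hpeq
    have hss : s = s' := by
      have hc := congrArg Prod.snd hpeq
      simp only at hc
      linarith
    exact Prod.ext hww hss
  -- SurjOn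
  · intro y hy
    obtain ⟨hyW, hycl⟩ := hy
    have hry : r y ≤ 0 := by rw [hclos] at hycl; exact hycl
    obtain ⟨htgt, hrectmem⟩ := hyW
    have hpsrc : f'.symm (y, (0:ℝ)) ∈ f'.source := f'.map_target htgt
    have hfp : Ψ (f'.symm (y, (0:ℝ))) = (y, 0) := by rw [← hfcoe]; exact f'.right_inv htgt
    have hrp1 : r (f'.symm (y, (0:ℝ))).1 = 0 := by
      have hc := congrArg Prod.snd hfp; simpa [hΨdef] using hc
    have hyp : (f'.symm (y, (0:ℝ))).1 + (f'.symm (y, (0:ℝ))).2 • π (f'.symm (y, (0:ℝ))).1 = y := by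
      have hc := congrArg Prod.fst hfp; simpa [hΨdef] using hc
    have hp1 : (f'.symm (y, (0:ℝ))).1 ∈ W₀ := hrectmem.1
    have hp2 : (f'.symm (y, (0:ℝ))).2 ∈ Ioo (-σ) σ := hrectmem.2
    have ht0 : 0 ≤ (f'.symm (y, (0:ℝ))).2 :=
      ((hkey _ hp1 hrp1 _ hp2).1).mp (by rw [hyp]; exact hry)
    refine ⟨((f'.symm (y, (0:ℝ))).1, 1 - (f'.symm (y, (0:ℝ))).2), ⟨⟨?_, ?_⟩, ?_⟩, ?_⟩
    · have h0mem : ((f'.symm (y, (0:ℝ))).1, (0:ℝ)) ∈ W₀ ×ˢ Ioo (-σ) σ := ⟨hp1, h0Ioo⟩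
      have himg0 := himg _ 0 h0mem hrp1
      have h00 : (f'.symm (y, (0:ℝ))).1 + (0:ℝ) • π (f'.symm (y, (0:ℝ))).1
          = (f'.symm (y, (0:ℝ))).1 := by simp
      rwa [h00] at himg0
    · rw [hfr]; exact hrp1
    · constructor
      · show 1 - σ < 1 - (f'.symm (y, (0:ℝ))).2
        linarith [hp2.2]
      · show 1 - (f'.symm (y, (0:ℝ))).2 ≤ 1
        linarith
    · show (f'.symm (y, (0:ℝ))).1 +
        (1 - (1 - (f'.symm (y, (0:ℝ))).2)) • π (f'.symm (y, (0:ℝ))).1 = y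
      rw [sub_sub_cancel]; exact hyp

/-- Lemma 2 of the paper.  The `C¹` hypersurface `∂Ω = frontier Ω` is given as the zero
set of a `C¹` defining function `r` with nonvanishing derivative, `π` is a `C¹` vector
field which is transversal to the hypersurface at `z` and points into `Ω`
(`fderiv ℝ r z (π z) < 0`).  Then `F (w, s) = w + (1 - s) • π w` is a bijection from
`(W ∩ ∂Ω) × (1 - σ, 1]` onto `W ∩ closure Ω` for a suitable neighborhood `W` of `z`. -/
theorem stmt_16 (n : ℕ) (Ω : Set (Fin n → ℂ)) (r : (Fin n → ℂ) → ℝ)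
    (hΩ : IsOpen Ω) (hbd : Bornology.IsBounded Ω)
    (hr : ContDiff ℝ 1 r)
    (hΩr : Ω = {x | r x < 0})
    (hfr : frontier Ω = {x | r x = 0})
    (hgrad : ∀ x ∈ frontier Ω, fderiv ℝ r x ≠ 0)
    (π : (Fin n → ℂ) → (Fin n → ℂ)) (hπ : ContDiff ℝ 1 π)
    (z : Fin n → ℂ) (hz : z ∈ frontier Ω)
    (hπz : π z ≠ 0) (htrans : fderiv ℝ r z (π z) < 0) :
    ∃ W ∈ nhds z, ∃ σ > (0:ℝ),
      Set.BijOn (fun p : (Fin n → ℂ) × ℝ => p.1 + (1 - p.2) • π p.1)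
        ((W ∩ frontier Ω) ×ˢ Set.Ioc (1 - σ) 1) (W ∩ closure Ω) := by
  exact aux_stmt16 Ω r hΩ hr hΩr hfr π hπ z hz htrans
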